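/- For every integer d ≥ 1 there exists a constant c_d > 0 (depending only on d) such that the following holds. Let C be a closed convex body in ℝ^d containing the closed unit ball centered at the origin and contained in the closed ball of radius d centered at the origin, and let ε be a real number with 0 < ε ≤ 1. Then there exists a finite set Q contained in the sphere of radius 2d centered at the origin with |Q| ≤ c_d · ε^{-(d-1)/2} such that, writing n(q) for the (unique) nearest point of C to q and h(q) = {x ∈ ℝ^d : ⟨x − n(q), q − n(q)⟩ ≤ 0}, one has: (i) C ⊆ h(q) for every q ∈ Q, and (ii) for every point p in the boundary of C there exists q ∈ Q such that the distance from p to the bounding hyperplane {x : ⟨x − n(q), q − n(q)⟩ = 0} of h(q) is at most ε/2. -/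

import Mathlib

open Metric MeasureTheory Filter Topology

theorem dudley_pow_diff_le (n : ℕ) (a b : ℝ) (hb : 0 ≤ b) (hab : b ≤ a) :
    a ^ (n+1) - b ^ (n+1) ≤ (n+1) * (a - b) * a ^ n := by
  induction n with
  | zero => simpa using by nlinarith
  | succ m ih =>
      have ha : 0 ≤ a := hb.trans hab
      have h2 : b ^ (m+1) ≤ a ^ (m+1) := pow_le_pow_left₀ hb hab _
      have h3 := mul_le_mul_of_nonneg_left ih ha
      have h4 := mul_le_mul_of_nonneg_left h2 (sub_nonneg.2 hab)
      push_cast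
      calc a ^ (m+1+1) - b ^ (m+1+1)
          = a * (a^(m+1) - b^(m+1)) + (a-b) * b^(m+1) := by ring
        _ ≤ a * ((↑m + 1) * (a - b) * a ^ m) + (a-b) * a^(m+1) := by linarith
        _ = ((m:ℝ) + 1 + 1) * (a - b) * a ^ (m+1) := by ring

theorem dudley_packing_bound (d : ℕ) (hd : 1 ≤ d) (R t : ℝ) (ht : 0 < t) (htR : t ≤ R)
    (Q : Finset (EuclideanSpace ℝ (Fin d)))
    (hQ : (Q : Set (EuclideanSpace ℝ (Fin d))) ⊆ sphere (0 : EuclideanSpace ℝ (Fin d)) R)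
    (hsep : ∀ q ∈ Q, ∀ q' ∈ Q, q ≠ q' → 2*t < dist q q') :
    (Q.card : ℝ) * t ^ d ≤ (R+t) ^ d - (R-t) ^ d := by
  haveI : Nontrivial (EuclideanSpace ℝ (Fin d)) := by
    have : Nonempty (Fin d) := ⟨⟨0, hd⟩⟩; infer_instance
  have hnormQ : ∀ q ∈ Q, ‖q‖ = R := fun q hq => by
    simpa [mem_sphere_iff_norm] using hQ hq
  have hdisj : (Q : Set (EuclideanSpace ℝ (Fin d))).PairwiseDisjoint (fun q => ball q t) := by
    intro q hq q' hq' hne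
    apply ball_disjoint_ball
    calc t + t = 2 * t := by ring
      _ ≤ dist q q' := (hsep q hq q' hq' hne).le
  have hsub : (⋃ q ∈ Q, ball q t) ⊆ ball (0 : EuclideanSpace ℝ (Fin d)) (R+t) := by
    intro x hx
    simp only [Set.mem_iUnion] at hx
    obtain ⟨q, hq, hxq⟩ := hx
    rw [mem_ball_zero_iff]
    calc ‖x‖ ≤ ‖q‖ + ‖x - q‖ := by
          have := norm_add_le q (x - q); simpa using this
      _ < R + t := by
          rw [hnormQ q hq, ← dist_eq_norm]
          linarith [mem_ball.mp hxq]
  have hdisj2 : Disjoint (⋃ q ∈ Q, ball q t) (closedBall (0 : EuclideanSpace ℝ (Fin d)) (R-t)) := by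
    rw [Set.disjoint_left]
    intro x hx hx2
    simp only [Set.mem_iUnion] at hx
    obtain ⟨q, hq, hxq⟩ := hx
    have h1 : ‖x‖ ≤ R - t := mem_closedBall_zero_iff.mp hx2
    have h2 : ‖q‖ - ‖x‖ ≤ ‖q - x‖ := norm_sub_norm_le q x
    have h3 : ‖q - x‖ < t := by rw [← dist_eq_norm, dist_comm]; exact mem_ball.mp hxq
    rw [hnormQ q hq] at h2
    linarith
  have hsub2 : closedBall (0 : EuclideanSpace ℝ (Fin d)) (R-t)
      ⊆ ball (0 : EuclideanSpace ℝ (Fin d)) (R+t) := closedBall_subset_ball (by linarith)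
  set B := volume (ball (0 : EuclideanSpace ℝ (Fin d)) 1) with hB
  have hball : ∀ (x : EuclideanSpace ℝ (Fin d)) (r : ℝ), 0 ≤ r →
      volume (ball x r) = ENNReal.ofReal (r ^ d) * B := fun x r hr => by
    rw [Measure.addHaar_ball volume x hr, finrank_euclideanSpace_fin]
  have hunion : volume (⋃ q ∈ Q, ball q t) = Q.card * (ENNReal.ofReal (t ^ d) * B) := by
    rw [measure_biUnion_finset hdisj (fun q _ => measurableSet_ball)]
    rw [Finset.sum_congr rfl (fun q _ => hball q t ht.le)]
    simp [Finset.sum_const, nsmul_eq_mul]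
  have hcb : volume (closedBall (0 : EuclideanSpace ℝ (Fin d)) (R-t))
      = ENNReal.ofReal ((R-t) ^ d) * B := by
    rw [Measure.addHaar_closedBall_eq_addHaar_ball, hball 0 (R-t) (by linarith)]
  have hbig : volume (ball (0 : EuclideanSpace ℝ (Fin d)) (R+t))
      = ENNReal.ofReal ((R+t) ^ d) * B := hball 0 _ (by linarith)
  have key : Q.card * (ENNReal.ofReal (t ^ d) * B) + ENNReal.ofReal ((R-t) ^ d) * B
      ≤ ENNReal.ofReal ((R+t) ^ d) * B := by
    rw [← hunion, ← hcb, ← hbig, ← measure_union hdisj2 measurableSet_closedBall]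
    exact measure_mono (Set.union_subset hsub hsub2)
  have hB0 : B ≠ 0 := (measure_ball_pos volume 0 one_pos).ne'
  have hBtop : B ≠ ⊤ := measure_ball_lt_top.ne
  have h1 : ((Q.card : ENNReal)) * ENNReal.ofReal (t ^ d) + ENNReal.ofReal ((R-t)^d)
      ≤ ENNReal.ofReal ((R+t) ^ d) := by
    rw [← ENNReal.mul_le_mul_iff_left hB0 hBtop]
    calc ((Q.card : ENNReal) * ENNReal.ofReal (t ^ d) + ENNReal.ofReal ((R-t)^d)) * B
        = Q.card * (ENNReal.ofReal (t ^ d) * B) + ENNReal.ofReal ((R-t) ^ d) * B := by ring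
      _ ≤ _ := key
  have key2 : ENNReal.ofReal ((Q.card : ℝ) * t ^ d + (R-t) ^ d) ≤ ENNReal.ofReal ((R+t) ^ d) := by
    calc ENNReal.ofReal ((Q.card : ℝ) * t ^ d + (R-t) ^ d)
        ≤ ENNReal.ofReal ((Q.card : ℝ) * t ^ d) + ENNReal.ofReal ((R-t) ^ d) :=
          ENNReal.ofReal_add_le
      _ = (Q.card : ENNReal) * ENNReal.ofReal (t ^ d) + ENNReal.ofReal ((R-t)^d) := by
          rw [ENNReal.ofReal_mul (Nat.cast_nonneg _), ENNReal.ofReal_natCast]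
      _ ≤ _ := h1
  have key3 : (Q.card : ℝ) * t ^ d + (R-t) ^ d ≤ (R+t) ^ d :=
    (ENNReal.ofReal_le_ofReal_iff (pow_nonneg (by linarith) d)).mp key2
  linarith

theorem dudley_sep_card_bound (d : ℕ) (hd : 1 ≤ d) (R δ : ℝ) (hR : 1 ≤ R) (hδ : 0 < δ)
    (hδ1 : δ ≤ 1) (Q : Finset (EuclideanSpace ℝ (Fin d)))
    (hQ : (Q : Set (EuclideanSpace ℝ (Fin d))) ⊆ sphere (0 : EuclideanSpace ℝ (Fin d)) R)
    (hsep : ∀ q ∈ Q, ∀ q' ∈ Q, q ≠ q' → δ < dist q q') :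
    (Q.card : ℝ) ≤ (d * 2^d * (R+1)^(d-1)) * (δ^(d-1))⁻¹ := by
  obtain ⟨m, hm⟩ : ∃ m, d = m + 1 := ⟨d - 1, (Nat.succ_pred_eq_of_pos hd).symm⟩
  subst hm
  simp only [Nat.add_sub_cancel] at *
  set t := δ/2 with htdef
  have ht : 0 < t := by positivity
  have htR : t ≤ R := by rw [htdef]; linarith
  have hpack := dudley_packing_bound (m+1) hd R t ht htR Q hQ (by
    intro q hq q' hq' hne
    have := hsep q hq q' hq' hne
    rw [htdef]; linarith)
  have hRt0 : 0 ≤ R - t := by linarith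
  have hdiff : (R+t) ^ (m+1) - (R-t) ^ (m+1) ≤ ((m+1:ℕ):ℝ) * (2*t) * (R+t)^m := by
    calc (R+t)^(m+1) - (R-t)^(m+1) ≤ (m+1) * ((R+t) - (R-t)) * (R+t)^m :=
          dudley_pow_diff_le m (R+t) (R-t) hRt0 (by linarith)
      _ = ((m+1:ℕ):ℝ) * (2*t) * (R+t)^m := by push_cast; ring
  have hRt1 : (R+t)^m ≤ (R+1)^m := pow_le_pow_left₀ (by linarith) (by linarith) _
  have h1 : (Q.card : ℝ) * t ^ (m+1) ≤ (2 * ((m+1:ℕ):ℝ) * (R+1)^m) * t := by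
    calc (Q.card : ℝ) * t ^ (m+1) ≤ (R+t) ^ (m+1) - (R-t) ^ (m+1) := hpack
      _ ≤ ((m+1:ℕ):ℝ) * (2*t) * (R+t)^m := hdiff
      _ ≤ ((m+1:ℕ):ℝ) * (2*t) * (R+1)^m := by
          apply mul_le_mul_of_nonneg_left hRt1 (by positivity)
      _ = (2 * ((m+1:ℕ):ℝ) * (R+1)^m) * t := by ring
  have h3 : (Q.card:ℝ) * t^m ≤ 2*((m+1:ℕ):ℝ)*(R+1)^m := by
    have h1' : ((Q.card:ℝ) * t^m) * t ≤ (2*((m+1:ℕ):ℝ)*(R+1)^m) * t := by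
      calc ((Q.card:ℝ) * t^m) * t = (Q.card:ℝ) * t^(m+1) := by rw [pow_succ]; ring
        _ ≤ _ := h1
    exact le_of_mul_le_mul_right h1' ht
  have h4 : (Q.card:ℝ) ≤ (2*((m+1:ℕ):ℝ)*(R+1)^m) * (t^m)⁻¹ := by
    rw [← div_eq_mul_inv, le_div_iff₀ (pow_pos ht _)]
    exact h3
  have htd : t^m = δ^m / 2^m := by rw [htdef, div_pow]
  calc (Q.card:ℝ) ≤ (2*((m+1:ℕ):ℝ)*(R+1)^m) * (t^m)⁻¹ := h4
    _ = (((m+1:ℕ):ℝ) * 2^(m+1) * (R+1)^m) * (δ^m)⁻¹ := by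
        rw [htd]
        have hδpow : (0:ℝ) < δ^m := pow_pos hδ _
        have h2pow : (0:ℝ) < (2:ℝ)^m := by positivity
        rw [pow_succ]
        field_simp

theorem dudley_net_exists (d : ℕ) (hd : 1 ≤ d) (R δ : ℝ) (hR : 1 ≤ R) (hδ : 0 < δ)
    (hδ1 : δ ≤ 1) :
    ∃ Q : Finset (EuclideanSpace ℝ (Fin d)),
      (Q : Set (EuclideanSpace ℝ (Fin d))) ⊆ sphere (0 : EuclideanSpace ℝ (Fin d)) R ∧
      (Q.card : ℝ) ≤ (d * 2^d * (R+1)^(d-1)) * (δ^(d-1))⁻¹ ∧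
      ∀ p ∈ sphere (0 : EuclideanSpace ℝ (Fin d)) R, ∃ q ∈ Q, dist p q ≤ δ := by
  classical
  set bound : ℝ := (d * 2^d * (R+1)^(d-1)) * (δ^(d-1))⁻¹ with hbound
  set N := ⌈bound⌉₊ with hN
  set P : ℕ → Prop := fun k => ∃ Q : Finset (EuclideanSpace ℝ (Fin d)),
    (Q : Set (EuclideanSpace ℝ (Fin d))) ⊆ sphere (0 : EuclideanSpace ℝ (Fin d)) R ∧
    (∀ q ∈ Q, ∀ q' ∈ Q, q ≠ q' → δ < dist q q') ∧ Q.card = k with hP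
  have hPbound : ∀ k, P k → k ≤ N := by
    rintro k ⟨Q, h1, h2, h3⟩
    have hb := dudley_sep_card_bound d hd R δ hR hδ hδ1 Q h1 h2
    rw [h3] at hb
    have : (k:ℝ) ≤ (N:ℝ) := hb.trans (Nat.le_ceil bound)
    exact_mod_cast this
  have hP0 : P 0 := ⟨∅, by simp, by simp, rfl⟩
  have hPk : P (Nat.findGreatest P N) := Nat.findGreatest_spec (Nat.zero_le N) hP0
  obtain ⟨Q, hQs, hQsep, hQcard⟩ := hPk
  refine ⟨Q, hQs, ?_, ?_⟩
  · exact dudley_sep_card_bound d hd R δ hR hδ hδ1 Q hQs hQsep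
  · intro p hp
    by_contra hcon
    push_neg at hcon
    have hpQ : p ∉ Q := fun h => by
      have := hcon p h
      simp at this
      linarith
    have hsep' : ∀ q ∈ insert p Q, ∀ q' ∈ insert p Q, q ≠ q' → δ < dist q q' := by
      intro q hq q' hq' hne
      rcases Finset.mem_insert.mp hq with h1 | h1 <;>
        rcases Finset.mem_insert.mp hq' with h2 | h2
      · exact absurd (h1.trans h2.symm) hne
      · rw [h1]; exact hcon q' h2
      · rw [h2, dist_comm]; exact hcon q h1
      · exact hQsep q h1 q' h2 hne
    have hPsucc : P (Nat.findGreatest P N + 1) := by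
      refine ⟨insert p Q, ?_, hsep', ?_⟩
      · rw [Finset.coe_insert]
        exact Set.insert_subset hp hQs
      · rw [Finset.card_insert_of_notMem hpQ, hQcard]
    exact Nat.findGreatest_is_greatest (Nat.lt_succ_self _) (hPbound _ hPsucc) hPsucc

theorem dudley_halfspace_of_min {d : ℕ} {C : Set (EuclideanSpace ℝ (Fin d))} (hC : Convex ℝ C)
    {q n : EuclideanSpace ℝ (Fin d)} (hn : n ∈ C)
    (hmin : ∀ x ∈ C, dist q n ≤ dist q x) :
    ∀ x ∈ C, inner ℝ (x - n) (q - n) ≤ (0:ℝ) := by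
  have hinf : ‖q - n‖ = ⨅ w : C, ‖q - w‖ := by
    haveI : Nonempty C := ⟨⟨n, hn⟩⟩
    apply le_antisymm
    · apply le_ciInf
      intro w
      rw [← dist_eq_norm, ← dist_eq_norm]
      exact hmin w w.2
    · exact ciInf_le ⟨0, fun _ ⟨_, h⟩ => h ▸ norm_nonneg _⟩ (⟨n, hn⟩ : C)
  intro x hx
  have := (norm_eq_iInf_iff_real_inner_le_zero hC hn).mp hinf x hx
  calc (inner ℝ (x - n) (q - n) : ℝ) = inner ℝ (q - n) (x - n) := real_inner_comm _ _
    _ ≤ 0 := this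

theorem dudley_supporting_dir {d : ℕ} {C : Set (EuclideanSpace ℝ (Fin d))}
    (hcl : IsClosed C) (hC : Convex ℝ C)
    (hball : closedBall (0 : EuclideanSpace ℝ (Fin d)) 1 ⊆ C)
    {p : EuclideanSpace ℝ (Fin d)} (hp : p ∈ frontier C) :
    ∃ u : EuclideanSpace ℝ (Fin d), ‖u‖ = 1 ∧ ∀ x ∈ C, inner ℝ (x - p) u ≤ (0:ℝ) := by
  have hballint : ball (0 : EuclideanSpace ℝ (Fin d)) 1 ⊆ interior C :=
    interior_maximal (ball_subset_closedBall.trans hball) isOpen_ball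
  have h0int : (0 : EuclideanSpace ℝ (Fin d)) ∈ interior C :=
    hballint (mem_ball_self one_pos)
  have hpnotint : p ∉ interior C := hp.2
  obtain ⟨f, hf⟩ := geometric_hahn_banach_open_point (hC.interior) isOpen_interior hpnotint
  have hfp0 : (0:ℝ) < f p := by
    have := hf 0 h0int
    simpa using this
  have hfle : ∀ x ∈ C, f x ≤ f p := by
    intro x hx
    have hseg : ∀ θ : ℝ, θ ∈ Set.Ioo (0:ℝ) 1 → θ • x ∈ interior C := by
      intro θ hθ
      have := hC.combo_interior_closure_mem_interior h0int (subset_closure hx)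
        (by linarith [hθ.2] : 0 < 1 - θ) hθ.1.le (by ring)
      simpa using this
    have hlim : Tendsto (fun θ : ℝ => θ * f x) (nhdsWithin 1 (Set.Iio 1)) (nhds (f x)) := by
      have : Tendsto (fun θ : ℝ => θ * f x) (nhds 1) (nhds (1 * f x)) :=
        (continuous_id.mul continuous_const).tendsto 1
      rw [one_mul] at this
      exact this.mono_left nhdsWithin_le_nhds
    refine le_of_tendsto hlim ?_
    filter_upwards [Ioo_mem_nhdsLT_of_mem (by constructor <;> norm_num : (1:ℝ) ∈ Set.Ioc 0 1)]
      with θ hθ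
    have := hf (θ • x) (hseg θ hθ)
    simpa [_root_.map_smul] using this.le
  set w := (InnerProductSpace.toDual ℝ (EuclideanSpace ℝ (Fin d))).symm f with hw
  have hwx : ∀ x, (inner ℝ w x : ℝ) = f x := fun x =>
    InnerProductSpace.toDual_symm_apply
  have hwne : w ≠ 0 := by
    intro h
    have : f p = 0 := by rw [← hwx p, h]; simp
    rw [this] at hfp0; exact lt_irrefl 0 hfp0
  refine ⟨‖w‖⁻¹ • w, norm_smul_inv_norm hwne, ?_⟩
  intro x hx
  have h1 : (inner ℝ (x - p) w : ℝ) ≤ 0 := by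
    have h2 : (inner ℝ w (x - p) : ℝ) = f x - f p := by rw [inner_sub_right, hwx, hwx]
    rw [real_inner_comm, h2]
    linarith [hfle x hx]
  rw [real_inner_smul_right]
  have : (0:ℝ) ≤ ‖w‖⁻¹ := inv_nonneg.mpr (norm_nonneg _)
  exact mul_nonpos_of_nonneg_of_nonpos this h1

theorem dudley_dist_hyperplane_bound {d : ℕ} (hd : 1 ≤ d) {C : Set (EuclideanSpace ℝ (Fin d))}
    (hCd : C ⊆ closedBall (0 : EuclideanSpace ℝ (Fin d)) d)
    {p u q qs n : EuclideanSpace ℝ (Fin d)} {t δ : ℝ}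
    (hpC : p ∈ C) (hu : ‖u‖ = 1) (hsupp : ∀ x ∈ C, inner ℝ (x - p) u ≤ (0:ℝ))
    (hq : ‖q‖ = 2 * d) (hnC : n ∈ C)
    (hhalf : ∀ x ∈ C, inner ℝ (x - n) (q - n) ≤ (0:ℝ))
    (hqs : qs = p + t • u) (ht : 0 ≤ t) (hδ : 0 ≤ δ) (hdist : dist q qs ≤ δ) :
    infDist p {x | inner ℝ (x - n) (q - n) = (0:ℝ)} ≤ δ^2 / 4 := by
  set v := q - n with hv
  have hnd : ‖n‖ ≤ (d:ℝ) := mem_closedBall_zero_iff.mp (hCd hnC)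
  have hd1 : (1:ℝ) ≤ d := by exact_mod_cast hd
  have hvnorm : (1:ℝ) ≤ ‖v‖ := by
    have h1 : ‖q‖ - ‖n‖ ≤ ‖q - n‖ := norm_sub_norm_le q n
    rw [hq] at h1
    calc (1:ℝ) ≤ 2 * d - d := by linarith
      _ ≤ ‖v‖ := by rw [hv]; linarith
  have hvne : ‖v‖ ≠ 0 := by positivity
  set a : ℝ := inner ℝ (n - p) v with ha
  have ha0 : 0 ≤ a := by
    have h := hhalf p hpC
    have hswap : a = -(inner ℝ (p - n) v : ℝ) := by
      rw [ha, show n - p = -(p - n) by abel, inner_neg_left]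
    rw [hswap]; linarith
  have hdecomp : a = inner ℝ (n - p) (q - qs) + t * (inner ℝ (n - p) u : ℝ) - ‖n - p‖^2 := by
    have hsplit : v = (q - qs) + t • u + (p - n) := by
      rw [hqs, hv]; abel
    rw [ha, hsplit, inner_add_right, inner_add_right, real_inner_smul_right]
    have h1 : (inner ℝ (n - p) (p - n) : ℝ) = -‖n - p‖^2 := by
      rw [show p - n = -(n - p) by abel, inner_neg_right, real_inner_self_eq_norm_sq]
    rw [h1]; ring
  have hCS : (inner ℝ (n - p) (q - qs) : ℝ) ≤ ‖n - p‖ * δ := by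
    calc (inner ℝ (n - p) (q - qs) : ℝ) ≤ ‖n - p‖ * ‖q - qs‖ := real_inner_le_norm _ _
      _ ≤ ‖n - p‖ * δ := by
          apply mul_le_mul_of_nonneg_left _ (norm_nonneg _)
          rw [← dist_eq_norm]; exact hdist
  have hsup : (inner ℝ (n - p) u : ℝ) ≤ 0 := hsupp n hnC
  have habound : a ≤ δ^2 / 4 := by
    have h2 : t * (inner ℝ (n - p) u : ℝ) ≤ 0 := mul_nonpos_of_nonneg_of_nonpos ht hsup
    nlinarith [norm_nonneg (n - p), hdecomp, hCS, sq_nonneg (‖n - p‖ - δ/2)]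
  set y := p + (a / ‖v‖^2) • v with hy
  have hymem : y ∈ {x | inner ℝ (x - n) (q - n) = (0:ℝ)} := by
    show (inner ℝ (y - n) (q - n) : ℝ) = 0
    have hyn : y - n = (p - n) + (a / ‖v‖^2) • v := by rw [hy]; abel
    rw [← hv, hyn, inner_add_left, real_inner_smul_left, real_inner_self_eq_norm_sq]
    have hpn : (inner ℝ (p - n) v : ℝ) = -a := by
      rw [ha, ← inner_neg_left]; congr 1; abel
    rw [hpn]
    field_simp
    ring
  have hdistpy : dist p y = a / ‖v‖ := by
    rw [hy, dist_eq_norm]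
    have : p - (p + (a / ‖v‖^2) • v) = -((a / ‖v‖^2) • v) := by abel
    rw [this, norm_neg, norm_smul, Real.norm_eq_abs, abs_div, abs_of_nonneg ha0,
      abs_of_nonneg (by positivity : (0:ℝ) ≤ ‖v‖^2)]
    field_simp
  calc infDist p {x | inner ℝ (x - n) (q - n) = (0:ℝ)} ≤ dist p y := infDist_le_dist_of_mem hymem
    _ = a / ‖v‖ := hdistpy
    _ ≤ a := by
        rw [div_le_iff₀ (by linarith)]
        nlinarith
    _ ≤ δ^2/4 := habound

theorem dudley_exists_shift {d : ℕ} (hd : 1 ≤ d) (p u : EuclideanSpace ℝ (Fin d))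
    (hu : ‖u‖ = 1) (hpd : ‖p‖ ≤ (d:ℝ)) :
    ∃ t : ℝ, 0 ≤ t ∧ ‖p + t • u‖ = 2*(d:ℝ) := by
  have hd1 : (1:ℝ) ≤ (d:ℝ) := by exact_mod_cast hd
  set a : ℝ := inner ℝ p u with hadef
  set Δ : ℝ := 4*(d:ℝ)^2 - ‖p‖^2 with hΔdef
  have hΔpos : 0 < Δ := by rw [hΔdef]; nlinarith [norm_nonneg p]
  set s : ℝ := Real.sqrt (a^2 + Δ) with hsdef
  have hs2 : s^2 = a^2 + Δ := Real.sq_sqrt (by nlinarith [sq_nonneg a])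
  have hsa : a ≤ s := by
    have h1 : |a| = Real.sqrt (a^2) := (Real.sqrt_sq_eq_abs a).symm
    have h2 : Real.sqrt (a^2) ≤ s := Real.sqrt_le_sqrt (by nlinarith)
    calc a ≤ |a| := le_abs_self a
      _ ≤ s := h1 ▸ h2
  refine ⟨s - a, by linarith, ?_⟩
  have ht : (0:ℝ) ≤ s - a := by linarith
  have hsq : ‖p + (s - a) • u‖^2 = (2*(d:ℝ))^2 := by
    rw [@norm_add_sq_real, real_inner_smul_right, norm_smul, Real.norm_eq_abs,
      abs_of_nonneg ht, hu, ← hadef]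
    nlinarith [hs2]
  have h := congrArg Real.sqrt hsq
  rwa [Real.sqrt_sq (norm_nonneg _), Real.sqrt_sq (by positivity)] at h

/-- The core construction in Dudley's proof: a small family of points `Q` on the sphere of
radius `2d` whose induced supporting halfspaces (at the nearest points of `C`) contain `C`
and pass within `ε/2` of every boundary point of `C`. -/
theorem dudley_core_construction (d : ℕ) (hd : 1 ≤ d) :
    ∃ c : ℝ, 0 < c ∧
      ∀ C : Set (EuclideanSpace ℝ (Fin d)),
        IsClosed C → Convex ℝ C →
        Metric.closedBall (0 : EuclideanSpace ℝ (Fin d)) 1 ⊆ C →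
        C ⊆ Metric.closedBall (0 : EuclideanSpace ℝ (Fin d)) d →
        ∀ ε : ℝ, 0 < ε → ε ≤ 1 →
          ∃ Q : Finset (EuclideanSpace ℝ (Fin d)),
            (Q : Set (EuclideanSpace ℝ (Fin d))) ⊆
                Metric.sphere (0 : EuclideanSpace ℝ (Fin d)) (2 * d) ∧
            (Q.card : ℝ) ≤ c * ε ^ (-((d : ℝ) - 1) / 2) ∧
            ∃ n : EuclideanSpace ℝ (Fin d) → EuclideanSpace ℝ (Fin d),
              (∀ q ∈ Q, n q ∈ C ∧ ∀ x ∈ C, dist q (n q) ≤ dist q x) ∧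
              (∀ q ∈ Q, C ⊆ {x | inner ℝ (x - n q) (q - n q) ≤ (0 : ℝ)}) ∧
              (∀ p ∈ frontier C, ∃ q ∈ Q,
                Metric.infDist p {x | inner ℝ (x - n q) (q - n q) = (0 : ℝ)} ≤ ε / 2) := by
  have hd1 : (1:ℝ) ≤ (d:ℝ) := by exact_mod_cast hd
  refine ⟨(d:ℝ) * 2^d * (2*(d:ℝ)+1)^(d-1), by positivity, ?_⟩
  intro C hclosed hconv hball hCd ε hε hε1
  set δ : ℝ := ε ^ ((1:ℝ)/2) with hδdef
  have hδpos : 0 < δ := Real.rpow_pos_of_pos hε _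
  have hδ1 : δ ≤ 1 := Real.rpow_le_one hε.le hε1 (by norm_num)
  obtain ⟨Q, hQs, hQcard, hQnet⟩ := dudley_net_exists d hd (2*(d:ℝ)) δ (by linarith) hδpos hδ1
  have hCne : C.Nonempty := ⟨0, hball (mem_closedBall_self zero_le_one)⟩
  have hnear := fun q => hclosed.exists_infDist_eq_dist hCne q
  set n : EuclideanSpace ℝ (Fin d) → EuclideanSpace ℝ (Fin d) :=
    fun q => (hnear q).choose with hn
  have hnmem : ∀ q, n q ∈ C := fun q => (hnear q).choose_spec.1
  have hnmin : ∀ q, ∀ x ∈ C, dist q (n q) ≤ dist q x := by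
    intro q x hx
    have h1 : infDist q C = dist q (n q) := (hnear q).choose_spec.2
    rw [← h1]
    exact infDist_le_dist_of_mem hx
  have hhalf : ∀ q, ∀ x ∈ C, inner ℝ (x - n q) (q - n q) ≤ (0:ℝ) := fun q =>
    dudley_halfspace_of_min hconv (hnmem q) (hnmin q)
  refine ⟨Q, hQs, ?_, n, fun q _ => ⟨hnmem q, hnmin q⟩, fun q _ x hx => hhalf q x hx, ?_⟩
  · -- cardinality bound
    have hpow : (δ^(d-1):ℝ) = ε ^ (((d:ℝ)-1)/2) := by
      rw [hδdef, ← Real.rpow_natCast (ε ^ ((1:ℝ)/2)) (d-1), ← Real.rpow_mul hε.le]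
      congr 1
      rw [Nat.cast_sub hd]
      push_cast
      ring
    have hpow2 : ((δ^(d-1):ℝ))⁻¹ = ε ^ (-((d:ℝ)-1)/2) := by
      rw [hpow, ← Real.rpow_neg hε.le]
      congr 1
      ring
    calc (Q.card : ℝ) ≤ ((d:ℝ) * 2^d * (2*(d:ℝ)+1)^(d-1)) * (δ^(d-1))⁻¹ := by
          have : (2*(d:ℝ)+1) = (2*(d:ℝ))+1 := by ring
          rw [this]; exact hQcard
      _ = (d:ℝ) * 2^d * (2*(d:ℝ)+1)^(d-1) * ε ^ (-((d : ℝ) - 1) / 2) := by rw [hpow2]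
  · -- boundary approximation
    intro p hp
    have hpC : p ∈ C := hclosed.frontier_subset hp
    have hpd : ‖p‖ ≤ (d:ℝ) := mem_closedBall_zero_iff.mp (hCd hpC)
    obtain ⟨u, hu, hsupp⟩ := dudley_supporting_dir hclosed hconv hball hp
    obtain ⟨t, ht, hqsnorm⟩ := dudley_exists_shift hd p u hu hpd
    set qs := p + t • u with hqsdef
    have hqsmem : qs ∈ sphere (0 : EuclideanSpace ℝ (Fin d)) (2*(d:ℝ)) :=
      mem_sphere_zero_iff_norm.mpr hqsnorm
    obtain ⟨q, hqQ, hqdist⟩ := hQnet qs hqsmem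
    refine ⟨q, hqQ, ?_⟩
    have hqnorm : ‖q‖ = 2*(d:ℝ) := by
      have := hQs hqQ
      simpa [mem_sphere_iff_norm] using this
    have hbound := dudley_dist_hyperplane_bound hd hCd hpC hu hsupp hqnorm (hnmem q)
      (hhalf q) hqsdef ht hδpos.le (by rw [dist_comm]; exact hqdist)
    have hδsq : δ^2 = ε := by
      rw [hδdef, ← Real.rpow_natCast (ε ^ ((1:ℝ)/2)) 2, ← Real.rpow_mul hε.le]
      norm_num
    calc infDist p {x | inner ℝ (x - n q) (q - n q) = (0:ℝ)} ≤ δ^2/4 := hbound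
      _ = ε/4 := by rw [hδsq]
      _ ≤ ε/2 := by linarith
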